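/- For every positive integer n, the polynomial (2k+1)^n equals Σ_{i=0}^{n} B(n+1,i+1) · C(k+n-i, n), where B(n,i) = Σ_{j=1}^{i} (-1)^{i-j} · C(n, i-j) · (2j-1)^{n-1} is the MacMahon number. -/

import Mathlib

/-- MacMahon number `B(n,i) = Σ_{j=1}^{i} (-1)^{i-j} C(n,i-j) (2j-1)^{n-1}`. -/
def macmahonB (n i : ℕ) : ℤ :=
  ∑ j ∈ Finset.Icc 1 i, (-1 : ℤ) ^ (i - j) * (n.choose (i - j) : ℤ) * ((2 * j - 1 : ℕ) : ℤ) ^ (n - 1)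

open Finset PowerSeries


lemma coeff_one_sub_pow (N m : ℕ) :
    (PowerSeries.coeff (R := ℤ) m) ((1 - PowerSeries.X) ^ N) = (-1) ^ m * (N.choose m : ℤ) := by
  have h : ((1 : ℤ⟦X⟧) - X) ^ N
      = ∑ j ∈ range (N + 1), ((-1) ^ j * (N.choose j : ℤ)) • X ^ j := by
    rw [sub_eq_add_neg, add_comm, add_pow]
    refine Finset.sum_congr rfl fun j hj => ?_
    rw [neg_pow, zsmul_eq_mul]
    push_cast
    ring
  rw [h, map_sum]
  simp only [LinearMap.map_smul, map_zsmul, coeff_X_pow, smul_eq_mul]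
  rcases le_or_gt m N with hm | hm
  · rw [Finset.sum_eq_single m]
    · simp
    · intro b _ hb; simp [Ne.symm hb]
    · intro h'; exact absurd (Finset.mem_range.2 (Nat.lt_succ_of_le hm)) h'
  · rw [Nat.choose_eq_zero_of_lt hm, Finset.sum_eq_zero]
    · simp
    intro b hb
    have hb' : m ≠ b := by have := Finset.mem_range.1 hb; omega
    simp [hb']


/-- The `N`-th finite difference of a polynomial of degree `r < N` vanishes. -/
lemma alt_diff : ∀ N : ℕ, ∀ r < N, ∀ c e : ℤ,
    ∑ m ∈ range (N + 1), (-1) ^ m * (N.choose m : ℤ) * (c + e * m) ^ r = 0 := by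
  intro N
  induction N with
  | zero => intro r hr; exact absurd hr (Nat.not_lt_zero r)
  | succ N ih =>
    intro r hr c e
    have hr' : r ≤ N := Nat.lt_succ_iff.1 hr
    set g : ℕ → ℤ := fun m => (-1) ^ m * (N.choose m : ℤ) * (c + e * m) ^ r with hg
    set A : ℕ → ℤ := fun m => (-1) ^ m * (N.choose m : ℤ) * ((c + e) + e * m) ^ r with hA
    have hS2 : ∑ m ∈ range (N + 1), A m = ∑ m ∈ range (N + 1), g m := by
      have expand : ∀ m ∈ range (N + 1), A m
          = ∑ s ∈ range (r + 1),
              ((-1) ^ m * (N.choose m : ℤ) * (c + e * m) ^ s) * (e ^ (r - s) * (r.choose s : ℤ)) := by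
        intro m _
        rw [hA]
        simp only []
        rw [show (c + e) + e * (m : ℤ) = (c + e * m) + e by ring, add_pow, Finset.mul_sum]
        exact Finset.sum_congr rfl fun s _ => by ring
      rw [Finset.sum_congr rfl expand, Finset.sum_comm]
      rw [Finset.sum_range_succ]
      have hzero : ∀ s ∈ range r,
          ∑ m ∈ range (N + 1), ((-1) ^ m * (N.choose m : ℤ) * (c + e * m) ^ s)
            * (e ^ (r - s) * (r.choose s : ℤ)) = 0 := by
        intro s hs
        rw [← Finset.sum_mul, ih s (lt_of_lt_of_le (Finset.mem_range.1 hs) hr') c e, zero_mul]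
      rw [Finset.sum_eq_zero hzero, zero_add]
      simp [hg]
    rw [Finset.sum_range_succ']
    have hstep : ∀ i : ℕ, (-1) ^ (i + 1) * ((N + 1).choose (i + 1) : ℤ) * (c + e * ((i : ℤ) + 1)) ^ r
        = g (i + 1) - A i := by
      intro i
      rw [Nat.choose_succ_succ, hg, hA]
      simp only []
      push_cast
      ring
    have hcast : ∀ i ∈ range (N + 1),
        (-1) ^ (i + 1) * ((N + 1).choose (i + 1) : ℤ) * (c + e * ((i + 1 : ℕ) : ℤ)) ^ r
        = g (i + 1) - A i := by
      intro i _
      rw [← hstep i]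
      norm_num
    rw [Finset.sum_congr rfl hcast, Finset.sum_sub_distrib, hS2]
    have h1 : ∑ m ∈ range (N + 2), g m = ∑ i ∈ range (N + 1), g (i + 1) + g 0 :=
      Finset.sum_range_succ' g (N + 1)
    have h2 : ∑ m ∈ range (N + 2), g m = ∑ m ∈ range (N + 1), g m := by
      rw [Finset.sum_range_succ]
      have : g (N + 1) = 0 := by simp [hg, Nat.choose_succ_self]
      rw [this, add_zero]
    have hf0 : (-1 : ℤ) ^ 0 * ((N + 1).choose 0 : ℤ) * (c + e * (0 : ℕ)) ^ r = g 0 := by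
      simp [hg]
    push_cast at hf0 ⊢
    have hg0 : g 0 = c ^ r := by simp [hg]
    linarith [h1, h2]

lemma key_coeff (n : ℕ) (d : ℕ) :
    (PowerSeries.coeff (R := ℤ) d) ((1 - PowerSeries.X) ^ (n + 1) * PowerSeries.mk (fun k => (2 * (k : ℤ) + 1) ^ n))
      = if d ≤ n then macmahonB (n + 1) (d + 1) else 0 := by
  rw [PowerSeries.coeff_mul, Finset.Nat.sum_antidiagonal_eq_sum_range_succ_mk]
  simp only [coeff_one_sub_pow, coeff_mk]
  by_cases hd : d ≤ n
  · rw [if_pos hd]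
    unfold macmahonB
    rw [show (n + 1) - 1 = n by omega]
    refine Finset.sum_nbij' (fun m => d + 1 - m) (fun j => d + 1 - j) ?_ ?_ ?_ ?_ ?_
    · intro m hm
      have := Finset.mem_range.1 hm
      simp only [Finset.mem_Icc]
      omega
    · intro j hj
      have := Finset.mem_Icc.1 hj
      simp only [Finset.mem_range]
      omega
    · intro m hm; have := Finset.mem_range.1 hm
      show d + 1 - (d + 1 - m) = m; omega
    · intro j hj; have := Finset.mem_Icc.1 hj
      show d + 1 - (d + 1 - j) = j; omega
    · intro m hm
      have hm' := Finset.mem_range.1 hm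
      have h1 : d + 1 - (d + 1 - m) = m := by omega
      have h2 : (2 * (d + 1 - m) - 1 : ℕ) = 2 * (d - m) + 1 := by omega
      rw [h1, h2]
      push_cast
      ring
  · rw [if_neg hd]
    push_neg at hd
    have hsub : Finset.range (n + 2) ⊆ Finset.range (d + 1) := by
      intro x hx; simp only [Finset.mem_range] at *; omega
    rw [← Finset.sum_subset hsub]
    · have := alt_diff (n + 1) n (Nat.lt_succ_self n) (2 * (d : ℤ) + 1) (-2)
      rw [← this]
      refine Finset.sum_congr rfl fun m hm => ?_
      have hm' : m ≤ n + 1 := by have := Finset.mem_range.1 hm; omega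
      have hcast : ((d - m : ℕ) : ℤ) = (d : ℤ) - m := by
        have : m ≤ d := by omega
        omega
      rw [hcast]
      ring_nf
    · intro x hx hx'
      have : n + 1 < x := by
        simp only [Finset.mem_range] at hx hx'; omega
      rw [Nat.choose_eq_zero_of_lt this]
      simp

/-- The h*-vector of `(2k+1)^n` is given by MacMahon numbers:
`(2k+1)^n = Σ_{i=0}^{n} B(n+1,i+1) · C(k+n-i, n)`. -/
theorem hstar_odd_pow_eq_macmahon (n : ℕ) (hn : 1 ≤ n) (k : ℕ) :
    (2 * (k : ℤ) + 1) ^ n =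
      ∑ i ∈ Finset.range (n + 1), macmahonB (n + 1) (i + 1) * ((k + n - i).choose n : ℤ) := by
  classical
  set A : PowerSeries ℤ := PowerSeries.mk (fun k => (2 * (k : ℤ) + 1) ^ n) with hA
  have hrepr : A = ((1 - PowerSeries.X) ^ (n + 1) * A) * PowerSeries.mk (fun e => ((n + e).choose n : ℤ)) := by
    have hu : (PowerSeries.mk fun e => ((n + e).choose n : ℤ)) * ((1 - PowerSeries.X) ^ (n + 1)) = 1 := by
      have := PowerSeries.mk_add_choose_mul_one_sub_pow_eq_one ℤ n
      convert this using 2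
    calc A = ((PowerSeries.mk fun e => ((n + e).choose n : ℤ)) * ((1 - PowerSeries.X) ^ (n + 1))) * A := by
            rw [hu, one_mul]
      _ = ((1 - PowerSeries.X) ^ (n + 1) * A) * PowerSeries.mk (fun e => ((n + e).choose n : ℤ)) := by
            ring
  have hL : (2 * (k : ℤ) + 1) ^ n = (PowerSeries.coeff (R := ℤ) k) A := by rw [hA, coeff_mk]
  rw [hL, hrepr, PowerSeries.coeff_mul, Finset.Nat.sum_antidiagonal_eq_sum_range_succ_mk]
  simp only [hA, key_coeff, coeff_mk]
  -- now: ∑ d ∈ range (k+1), (if d ≤ n then B (d+1) else 0) * C(n + (k - d), n)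
  --    = ∑ i ∈ range (n+1), B (i+1) * C(k + n - i, n)
  have hmemL : Finset.range (k + 1) ⊆ Finset.range (k + n + 1) := by
    intro x hx; simp only [Finset.mem_range] at *; omega
  have hmemR : Finset.range (n + 1) ⊆ Finset.range (k + n + 1) := by
    intro x hx; simp only [Finset.mem_range] at *; omega
  have hLHS : ∑ d ∈ Finset.range (k + 1),
        (if d ≤ n then macmahonB (n + 1) (d + 1) else 0) * (((n + (k - d)).choose n : ℕ) : ℤ)
      = ∑ d ∈ Finset.range (k + n + 1),
        (if d ≤ n then macmahonB (n + 1) (d + 1) else 0) * (((k + n - d).choose n : ℕ) : ℤ) := by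
    rw [← Finset.sum_subset hmemL]
    · refine Finset.sum_congr rfl fun d hd => ?_
      have hd' : d ≤ k := by have := Finset.mem_range.1 hd; omega
      rw [show n + (k - d) = k + n - d by omega]
    · intro x hx hx'
      have h1 : k < x := by simp only [Finset.mem_range] at hx'; omega
      have h2 : x ≤ k + n := by simp only [Finset.mem_range] at hx; omega
      by_cases hxn : x ≤ n
      · rw [if_pos hxn, Nat.choose_eq_zero_of_lt (by omega : k + n - x < n)]
        simp
      · rw [if_neg hxn, zero_mul]
  have hRHS : ∑ i ∈ Finset.range (n + 1), macmahonB (n + 1) (i + 1) * (((k + n - i).choose n : ℕ) : ℤ)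
      = ∑ d ∈ Finset.range (k + n + 1),
        (if d ≤ n then macmahonB (n + 1) (d + 1) else 0) * (((k + n - d).choose n : ℕ) : ℤ) := by
    rw [← Finset.sum_subset hmemR]
    · refine Finset.sum_congr rfl fun i hi => ?_
      have hi' : i ≤ n := by have := Finset.mem_range.1 hi; omega
      rw [if_pos hi']
    · intro x hx hx'
      have hxn : ¬ x ≤ n := by simp only [Finset.mem_range] at hx'; omega
      rw [if_neg hxn, zero_mul]
  rw [hLHS, hRHS]
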